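/- arXiv:2105.04664 — 4 statements merged into one kernel-verified Lean document; each statement's English description precedes it below -/
import Mathlib

section
/- Let a < b < c < d and α > 0. Suppose u is a C¹ solution of u_t + α u_x = 0 on [a,c]×[0,T] with u(a,t) = 0, and v is a C¹ solution of v_t + α v_x = 0 on [b,d]×[0,T] with v(b,t) = u(b,t) for all t. Then ∫_b^d v(x,T)² dx + ∫_a^b u(x,T)² dx ≤ ∫_b^d v(x,0)² dx + ∫_a^b u(x,0)² dx. -/
open Set intervalIntegral MeasureTheory Metric Filter

lemma energy_aux (p q T α : ℝ) (hpq : p < q) (hT : 0 ≤ T)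
    (w wt wx : ℝ → ℝ → ℝ)
    (hwt : ∀ x ∈ Icc p q, ∀ t ∈ Icc 0 T, HasDerivAt (fun τ => w x τ) (wt x t) t)
    (hwx : ∀ x ∈ Icc p q, ∀ t ∈ Icc 0 T, HasDerivAt (fun ξ => w ξ t) (wx x t) x)
    (hcw : ContinuousOn (fun P : ℝ × ℝ => w P.1 P.2) (Icc p q ×ˢ Icc 0 T))
    (hcwt : ContinuousOn (fun P : ℝ × ℝ => wt P.1 P.2) (Icc p q ×ˢ Icc 0 T))
    (hcwx : ContinuousOn (fun P : ℝ × ℝ => wx P.1 P.2) (Icc p q ×ˢ Icc 0 T))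
    (hpde : ∀ x ∈ Icc p q, ∀ t ∈ Icc 0 T, wt x t + α * wx x t = 0) :
    ContinuousOn (fun t => ∫ x in p..q, (w x t)^2) (Icc 0 T) ∧
    ∀ t ∈ Ioo 0 T, HasDerivAt (fun τ => ∫ x in p..q, (w x τ)^2)
      (-α * ((w q t)^2 - (w p t)^2)) t := by
  have huIcc : uIcc p q = Icc p q := uIcc_of_le hpq.le
  have huIoc : Set.uIoc p q ⊆ Icc p q := by rw [uIoc_of_le hpq.le]; exact Ioc_subset_Icc_self
  have hslice : ∀ t ∈ Icc 0 T, ContinuousOn (fun x => w x t) (Icc p q) := fun t ht =>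
    hcw.comp ((continuous_id.prodMk continuous_const).continuousOn)
      (fun x hx => mk_mem_prod hx ht)
  have hslicet : ∀ t ∈ Icc 0 T, ContinuousOn (fun x => wt x t) (Icc p q) := fun t ht =>
    hcwt.comp ((continuous_id.prodMk continuous_const).continuousOn)
      (fun x hx => mk_mem_prod hx ht)
  have hslicex : ∀ t ∈ Icc 0 T, ContinuousOn (fun x => wx x t) (Icc p q) := fun t ht =>
    hcwx.comp ((continuous_id.prodMk continuous_const).continuousOn)
      (fun x hx => mk_mem_prod hx ht)
  obtain ⟨C, hC⟩ := (isCompact_Icc.prod isCompact_Icc).exists_bound_of_continuousOn hcw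
  obtain ⟨C', hC'⟩ := (isCompact_Icc.prod isCompact_Icc).exists_bound_of_continuousOn hcwt
  have hC0 : 0 ≤ C := le_trans (norm_nonneg _) (hC (p, 0) ⟨⟨le_rfl, hpq.le⟩, ⟨le_rfl, hT⟩⟩)
  have hC'0 : 0 ≤ C' := le_trans (norm_nonneg _) (hC' (p, 0) ⟨⟨le_rfl, hpq.le⟩, ⟨le_rfl, hT⟩⟩)
  constructor
  · -- continuity
    intro t₀ ht₀
    apply intervalIntegral.continuousWithinAt_of_dominated_interval
      (bound := fun _ => C^2)
    · filter_upwards [self_mem_nhdsWithin] with τ hτ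
      exact (((hslice τ hτ).mono huIoc).pow 2).aestronglyMeasurable measurableSet_uIoc
    · filter_upwards [self_mem_nhdsWithin] with τ hτ
      filter_upwards with x hx
      have h1 := hC (x, τ) ⟨huIoc hx, hτ⟩
      simp only [Real.norm_eq_abs] at h1 ⊢
      rw [abs_pow]
      exact pow_le_pow_left₀ (abs_nonneg _) h1 2
    · exact intervalIntegrable_const
    · filter_upwards with x hx
      exact ((hwt x (huIoc hx) t₀ ht₀).continuousAt.continuousWithinAt).pow 2
  · -- derivative
    intro t₀ ht₀
    have ht₀' : t₀ ∈ Icc 0 T := Ioo_subset_Icc_self ht₀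
    set ε := min t₀ (T - t₀) with hε
    have hεpos : 0 < ε := lt_min ht₀.1 (sub_pos.mpr ht₀.2)
    have hball : ball t₀ ε ⊆ Icc 0 T := by
      intro τ hτ
      rw [mem_ball, Real.dist_eq, abs_lt] at hτ
      constructor
      · nlinarith [min_le_left t₀ (T - t₀)]
      · nlinarith [min_le_right t₀ (T - t₀)]
    have key := intervalIntegral.hasDerivAt_integral_of_dominated_loc_of_deriv_le
      (μ := volume) (F := fun τ x => (w x τ)^2)
      (F' := fun τ x => 2 * w x τ * wt x τ) (x₀ := t₀) (a := p) (b := q)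
      (bound := fun _ => 2 * C * C') (ball_mem_nhds t₀ hεpos)
      ?_ ?_ ?_ ?_ intervalIntegrable_const ?_
    · have heq : (∫ x in p..q, 2 * w x t₀ * wt x t₀)
          = -α * ((w q t₀)^2 - (w p t₀)^2) := by
        have h1 : ∀ x ∈ uIcc p q, 2 * w x t₀ * wt x t₀
            = -α * (2 * w x t₀ * wx x t₀) := by
          intro x hx
          rw [huIcc] at hx
          have h2 : wt x t₀ = -(α * wx x t₀) := by linarith [hpde x hx t₀ ht₀']
          rw [h2]; ring
        rw [intervalIntegral.integral_congr h1, intervalIntegral.integral_const_mul]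
        congr 1
        apply intervalIntegral.integral_eq_sub_of_hasDerivAt
        · intro x hx
          rw [huIcc] at hx
          have := (hwx x hx t₀ ht₀').fun_pow 2
          simpa [mul_comm, mul_assoc, mul_left_comm] using this
        · apply ContinuousOn.intervalIntegrable
          rw [huIcc]
          exact (continuousOn_const.mul (hslice t₀ ht₀')).mul (hslicex t₀ ht₀')
      rw [← heq]
      exact key.2
    · filter_upwards [Icc_mem_nhds ht₀.1 ht₀.2] with τ hτ
      exact (((hslice τ hτ).mono huIoc).pow 2).aestronglyMeasurable measurableSet_uIoc
    · apply ContinuousOn.intervalIntegrable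
      rw [huIcc]
      exact (hslice t₀ ht₀').pow 2
    · exact (((continuousOn_const.mul (hslice t₀ ht₀')).mul (hslicet t₀ ht₀')).mono
        huIoc).aestronglyMeasurable measurableSet_uIoc
    · filter_upwards with x hx
      intro τ hτ
      have hτ' := hball hτ
      have h1 := hC (x, τ) ⟨huIoc hx, hτ'⟩
      have h2 := hC' (x, τ) ⟨huIoc hx, hτ'⟩
      simp only [Real.norm_eq_abs] at h1 h2 ⊢
      calc |2 * w x τ * wt x τ| = 2 * |w x τ| * |wt x τ| := by
            rw [abs_mul, abs_mul]; norm_num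
        _ ≤ 2 * C * C' := by
            apply mul_le_mul _ h2 (abs_nonneg _) (by positivity)
            nlinarith [abs_nonneg (w x τ)]
    · filter_upwards with x hx
      intro τ hτ
      have := (hwt x (huIoc hx) τ (hball hτ)).fun_pow 2
      simpa [mul_comm, mul_assoc, mul_left_comm] using this

theorem stmt2 (a b c d α T : ℝ) (hab : a < b) (hbc : b < c) (hcd : c < d)
    (hα : 0 < α) (hT : 0 ≤ T)
    (u ut ux v vt vx : ℝ → ℝ → ℝ)
    (hut : ∀ x ∈ Set.Icc a c, ∀ t ∈ Set.Icc 0 T, HasDerivAt (fun τ => u x τ) (ut x t) t)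
    (hux : ∀ x ∈ Set.Icc a c, ∀ t ∈ Set.Icc 0 T, HasDerivAt (fun ξ => u ξ t) (ux x t) x)
    (hvt : ∀ x ∈ Set.Icc b d, ∀ t ∈ Set.Icc 0 T, HasDerivAt (fun τ => v x τ) (vt x t) t)
    (hvx : ∀ x ∈ Set.Icc b d, ∀ t ∈ Set.Icc 0 T, HasDerivAt (fun ξ => v ξ t) (vx x t) x)
    (hcontu : ContinuousOn (fun p : ℝ × ℝ => u p.1 p.2) (Set.Icc a c ×ˢ Set.Icc 0 T))
    (hcontut : ContinuousOn (fun p : ℝ × ℝ => ut p.1 p.2) (Set.Icc a c ×ˢ Set.Icc 0 T))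
    (hcontux : ContinuousOn (fun p : ℝ × ℝ => ux p.1 p.2) (Set.Icc a c ×ˢ Set.Icc 0 T))
    (hcontv : ContinuousOn (fun p : ℝ × ℝ => v p.1 p.2) (Set.Icc b d ×ˢ Set.Icc 0 T))
    (hcontvt : ContinuousOn (fun p : ℝ × ℝ => vt p.1 p.2) (Set.Icc b d ×ˢ Set.Icc 0 T))
    (hcontvx : ContinuousOn (fun p : ℝ × ℝ => vx p.1 p.2) (Set.Icc b d ×ˢ Set.Icc 0 T))
    (hpdeu : ∀ x ∈ Set.Icc a c, ∀ t ∈ Set.Icc 0 T, ut x t + α * ux x t = 0)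
    (hpdev : ∀ x ∈ Set.Icc b d, ∀ t ∈ Set.Icc 0 T, vt x t + α * vx x t = 0)
    (hbcu : ∀ t ∈ Set.Icc 0 T, u a t = 0)
    (hcouple : ∀ t ∈ Set.Icc 0 T, v b t = u b t) :
    (∫ x in b..d, (v x T)^2) + (∫ x in a..b, (u x T)^2)
      ≤ (∫ x in b..d, (v x 0)^2) + (∫ x in a..b, (u x 0)^2) := by
  have hsubu : Icc a b ⊆ Icc a c := Icc_subset_Icc le_rfl hbc.le
  have hsubu' : Icc a b ×ˢ Icc 0 T ⊆ Icc a c ×ˢ Icc 0 T :=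
    prod_mono hsubu subset_rfl
  have hU := energy_aux a b T α hab hT u ut ux
    (fun x hx => hut x (hsubu hx)) (fun x hx => hux x (hsubu hx))
    (hcontu.mono hsubu') (hcontut.mono hsubu') (hcontux.mono hsubu')
    (fun x hx => hpdeu x (hsubu hx))
  have hV := energy_aux b d T α (hbc.trans hcd) hT v vt vx hvt hvx
    hcontv hcontvt hcontvx hpdev
  set E : ℝ → ℝ := fun t => (∫ x in b..d, (v x t)^2) + (∫ x in a..b, (u x t)^2) with hE
  have hcontE : ContinuousOn E (Icc 0 T) := hV.1.add hU.1
  have hanti : AntitoneOn E (Icc 0 T) := by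
    apply antitoneOn_of_deriv_nonpos (convex_Icc 0 T) hcontE
    · intro t ht
      rw [interior_Icc] at ht
      exact ((hV.2 t ht).add (hU.2 t ht)).differentiableAt.differentiableWithinAt
    · intro t ht
      rw [interior_Icc] at ht
      have hd := ((hV.2 t ht).add (hU.2 t ht)).deriv
      rw [show deriv E t = _ from hd]
      have ht' : t ∈ Icc 0 T := Ioo_subset_Icc_self ht
      rw [hcouple t ht', hbcu t ht']
      nlinarith [sq_nonneg (v d t), sq_nonneg (u b t)]
  exact hanti (left_mem_Icc.mpr hT) (right_mem_Icc.mpr hT) hT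
end

section
/- Let a < b < c < d and α > 0, and let ω₀ : [a,d] → ℝ be C¹ with ω₀(a)=0. Suppose ω solves ω_t + α ω_x = 0 on [a,d] with ω(a,t)=0 and ω(·,0)=ω₀; u solves the same PDE on [a,c] with u(a,t)=0, u(·,0)=ω₀; and v solves it on [b,d] with v(b,t)=u(b,t), v(·,0)=ω₀. Then u(x,t) = ω(x,t) for all x ∈ [a,c] and v(x,t) = ω(x,t) for all x ∈ [b,d], for every t ∈ [0,T]. -/
open Set intervalIntegral Filter Topology

private lemma line_deriv_zero {p q T α : ℝ} (hα : 0 < α)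
    (w wt wx : ℝ → ℝ → ℝ)
    (hwt : ∀ x ∈ Icc p q, ∀ t ∈ Icc 0 T, HasDerivAt (fun τ => w x τ) (wt x t) t)
    (hwx : ∀ x ∈ Icc p q, ∀ t ∈ Icc 0 T, HasDerivAt (fun ξ => w ξ t) (wx x t) x)
    (hcontwx : ContinuousOn (fun pr : ℝ × ℝ => wx pr.1 pr.2) (Icc p q ×ˢ Icc 0 T))
    (hpde : ∀ x ∈ Icc p q, ∀ t ∈ Icc 0 T, wt x t + α * wx x t = 0)
    {x0 s0 t1 : ℝ}
    (hsub : ∀ s ∈ Icc s0 t1, x0 + α * s ∈ Icc p q)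
    (hssub : Icc s0 t1 ⊆ Icc 0 T)
    {s : ℝ} (hs : s ∈ Icc s0 t1) :
    HasDerivWithinAt (fun s => w (x0 + α * s) s) 0 (Icc s0 t1) s := by
  set ξ := x0 + α * s with hξdef
  have hξ : ξ ∈ Icc p q := hsub s hs
  have hsT : s ∈ Icc 0 T := hssub hs
  rw [hasDerivWithinAt_iff_tendsto_slope]
  set F : ℝ → ℝ := fun s' => (w (x0 + α * s') s' - w ξ s') / (s' - s) with hFdef
  -- MVT step
  have hMVT : ∀ s' ∈ Icc s0 t1, s' ≠ s → ∃ cc ∈ Icc p q,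
      |cc - ξ| ≤ α * |s' - s| ∧ F s' = α * wx cc s' := by
    intro s' hs' hne
    have hs'T : s' ∈ Icc 0 T := hssub hs'
    have hξ' : x0 + α * s' ∈ Icc p q := hsub s' hs'
    set ξ' := x0 + α * s' with hξ'def
    have hne2 : s' - s ≠ 0 := sub_ne_zero.2 hne
    rcases lt_or_gt_of_ne hne with hlt | hgt
    · -- s' < s, so ξ' < ξ
      have hξlt : ξ' < ξ := by
        have : α * s' < α * s := by exact mul_lt_mul_of_pos_left hlt hα
        simpa [hξdef, hξ'def] using this
      obtain ⟨cc, hcc, hslope⟩ := exists_hasDerivAt_eq_slope (fun y => w y s')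
        (fun y => wx y s') hξlt
        (fun y hy => ((hwx y ⟨le_trans hξ'.1 hy.1, le_trans hy.2 hξ.2⟩ s' hs'T).continuousAt).continuousWithinAt)
        (fun y hy => hwx y ⟨le_trans hξ'.1 hy.1.le, le_trans hy.2.le hξ.2⟩ s' hs'T)
      have hccmem : cc ∈ Icc p q := ⟨le_trans hξ'.1 hcc.1.le, le_trans hcc.2.le hξ.2⟩
      refine ⟨cc, hccmem, ?_, ?_⟩
      · have h1 : |cc - ξ| ≤ ξ - ξ' := by
          rw [abs_of_nonpos (by linarith [hcc.2])]; linarith [hcc.1]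
        have h2 : ξ - ξ' = α * (s - s') := by rw [hξdef, hξ'def]; ring
        have h3 : α * |s' - s| = α * (s - s') := by
          rw [abs_of_neg (by linarith)]; ring
        rw [h3]; linarith
      · rw [eq_div_iff (by linarith : ξ - ξ' ≠ 0)] at hslope
        rw [hFdef]
        simp only
        rw [div_eq_iff hne2]
        simp only [← hξ'def]
        have h2 : ξ - ξ' = α * (s - s') := by rw [hξdef, hξ'def]; ring
        rw [h2] at hslope
        linear_combination hslope
    · -- s < s', so ξ < ξ'
      have hξlt : ξ < ξ' := by
        have : α * s < α * s' := by exact mul_lt_mul_of_pos_left hgt hα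
        simpa [hξdef, hξ'def] using this
      obtain ⟨cc, hcc, hslope⟩ := exists_hasDerivAt_eq_slope (fun y => w y s')
        (fun y => wx y s') hξlt
        (fun y hy => ((hwx y ⟨le_trans hξ.1 hy.1, le_trans hy.2 hξ'.2⟩ s' hs'T).continuousAt).continuousWithinAt)
        (fun y hy => hwx y ⟨le_trans hξ.1 hy.1.le, le_trans hy.2.le hξ'.2⟩ s' hs'T)
      have hccmem : cc ∈ Icc p q := ⟨le_trans hξ.1 hcc.1.le, le_trans hcc.2.le hξ'.2⟩
      refine ⟨cc, hccmem, ?_, ?_⟩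
      · have h1 : |cc - ξ| ≤ ξ' - ξ := by
          rw [abs_of_nonneg (by linarith [hcc.1])]; linarith [hcc.2]
        have h2 : ξ' - ξ = α * (s' - s) := by rw [hξdef, hξ'def]; ring
        have h3 : α * |s' - s| = α * (s' - s) := by
          rw [abs_of_pos (by linarith)]
        rw [h3]; linarith
      · rw [eq_div_iff (by linarith : ξ' - ξ ≠ 0)] at hslope
        rw [hFdef]
        simp only
        rw [div_eq_iff hne2]
        simp only [← hξ'def]
        have h2 : ξ' - ξ = α * (s' - s) := by rw [hξdef, hξ'def]; ring
        rw [h2] at hslope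
        linear_combination -hslope
  -- F tends to α * wx ξ s
  have hF : Tendsto F (𝓝[Icc s0 t1 \ {s}] s) (𝓝 (α * wx ξ s)) := by
    rw [Metric.tendsto_nhdsWithin_nhds]
    intro ε hε
    have hc := hcontwx (ξ, s) ⟨hξ, hsT⟩
    rw [Metric.continuousWithinAt_iff] at hc
    obtain ⟨δ, hδ, hball⟩ := hc (ε / α) (div_pos hε hα)
    refine ⟨δ / (α + 1), div_pos hδ (by linarith), ?_⟩
    intro s' hs' hdist
    have hne : s' ≠ s := by
      intro h; exact hs'.2 (by simp [h])
    obtain ⟨cc, hccmem, hccle, hFval⟩ := hMVT s' hs'.1 hne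
    have hs'T : s' ∈ Icc 0 T := hssub hs'.1
    have hds : dist s' s < δ / (α + 1) := hdist
    have hdists : dist s' s = |s' - s| := Real.dist_eq s' s
    have hd1 : dist cc ξ < δ := by
      rw [Real.dist_eq]
      calc |cc - ξ| ≤ α * |s' - s| := hccle
        _ < α * (δ / (α + 1)) := by
            refine mul_lt_mul_of_pos_left ?_ hα
            rw [← hdists]; exact hds
        _ ≤ δ := by
            rw [← mul_div_assoc, div_le_iff₀ (by linarith : (0:ℝ) < α + 1)]
            nlinarith
    have hd2 : dist s' s < δ := lt_of_lt_of_le hds (by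
      apply div_le_self hδ.le; linarith)
    have hballapp : dist (wx cc s') (wx ξ s) < ε / α := by
      have hd : dist ((cc, s') : ℝ × ℝ) (ξ, s) < δ := by
        rw [Prod.dist_eq]; simp only [sup_lt_iff]; exact ⟨hd1, hd2⟩
      simpa using hball ⟨hccmem, hs'T⟩ hd
    rw [hFval, Real.dist_eq]
    have : α * wx cc s' - α * wx ξ s = α * (wx cc s' - wx ξ s) := by ring
    rw [this, abs_mul, abs_of_pos hα]
    calc α * |wx cc s' - wx ξ s| < α * (ε / α) := by
          refine mul_lt_mul_of_pos_left ?_ hα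
          rw [← Real.dist_eq]; exact hballapp
      _ = ε := by field_simp
  -- slope of w ξ in time
  have hG : Tendsto (slope (fun τ => w ξ τ) s) (𝓝[Icc s0 t1 \ {s}] s) (𝓝 (wt ξ s)) := by
    have h := hasDerivAt_iff_tendsto_slope.1 (hwt ξ hξ s hsT)
    exact h.mono_left (nhdsWithin_mono s (fun y hy => hy.2))
  have hsum := hF.add hG
  have hzero : α * wx ξ s + wt ξ s = 0 := by linarith [hpde ξ hξ s hsT]
  rw [hzero] at hsum
  refine hsum.congr' ?_
  filter_upwards [self_mem_nhdsWithin] with s' hs'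
  have hne : s' ≠ s := by intro h; exact hs'.2 (by simp [h])
  have hne2 : s' - s ≠ 0 := sub_ne_zero.2 hne
  simp only [slope_def_field, Pi.add_apply, hFdef, ← hξdef]
  field_simp
  ring

private lemma transport_unique {p q T α : ℝ} (hα : 0 < α)
    (w wt wx : ℝ → ℝ → ℝ)
    (hwt : ∀ x ∈ Icc p q, ∀ t ∈ Icc 0 T, HasDerivAt (fun τ => w x τ) (wt x t) t)
    (hwx : ∀ x ∈ Icc p q, ∀ t ∈ Icc 0 T, HasDerivAt (fun ξ => w ξ t) (wx x t) x)
    (hcontwx : ContinuousOn (fun pr : ℝ × ℝ => wx pr.1 pr.2) (Icc p q ×ˢ Icc 0 T))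
    (hpde : ∀ x ∈ Icc p q, ∀ t ∈ Icc 0 T, wt x t + α * wx x t = 0)
    (hbc : ∀ t ∈ Icc 0 T, w p t = 0)
    (hic : ∀ x ∈ Icc p q, w x 0 = 0) :
    ∀ t ∈ Icc 0 T, ∀ x ∈ Icc p q, w x t = 0 := by
  intro t ht x hx
  set x0 := x - α * t with hx0
  have hαt : 0 ≤ α * t := mul_nonneg hα.le ht.1
  have key : ∀ s0, 0 ≤ s0 → s0 ≤ t → (∀ s ∈ Icc s0 t, x0 + α * s ∈ Icc p q) →
      w (x0 + α * s0) s0 = 0 → w x t = 0 := by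
    intro s0 hs00 hs0t hsub hinit
    have hssub : Icc s0 t ⊆ Icc 0 T := Icc_subset_Icc hs00 ht.2
    have hder : ∀ s ∈ Icc s0 t, HasDerivWithinAt (fun s => w (x0 + α * s) s) 0 (Icc s0 t) s :=
      fun s hs => line_deriv_zero hα w wt wx hwt hwx hcontwx hpde hsub hssub hs
    have hcont : ContinuousOn (fun s => w (x0 + α * s) s) (Icc s0 t) :=
      fun s hs => (hder s hs).continuousWithinAt
    have hder' : ∀ s ∈ Ico s0 t, HasDerivWithinAt (fun s => w (x0 + α * s) s) 0 (Ici s) s := by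
      intro s hs
      exact (hder s (Ico_subset_Icc_self hs)).mono_of_mem_nhdsWithin (Icc_mem_nhdsGE_of_mem hs)
    have hconst := constant_of_has_deriv_right_zero hcont hder' t (right_mem_Icc.mpr hs0t)
    have hxeq : x0 + α * t = x := by rw [hx0]; ring
    rw [hxeq] at hconst
    rw [hconst, hinit]
  rcases le_or_gt p x0 with hcase | hcase
  · refine key 0 le_rfl ht.1 ?_ ?_
    · intro s hs
      constructor
      · have : α * s ≥ 0 := mul_nonneg hα.le hs.1
        linarith
      · have : α * s ≤ α * t := mul_le_mul_of_nonneg_left hs.2 hα.le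
        nlinarith [hx.2]
    · have hx0mem : x0 ∈ Icc p q := ⟨hcase, by rw [hx0]; linarith [hx.2]⟩
      simpa using hic x0 hx0mem
  · set s0 := t - (x - p) / α with hs0def
    have hxp : p ≤ x := hx.1
    have hs0nonneg : 0 ≤ s0 := by
      rw [hs0def, sub_nonneg, div_le_iff₀ hα]
      rw [hx0] at hcase; linarith
    have hs0t : s0 ≤ t := by
      rw [hs0def]
      have : 0 ≤ (x - p) / α := div_nonneg (by linarith) hα.le
      linarith
    have hps0 : x0 + α * s0 = p := by
      rw [hx0, hs0def]
      field_simp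
      ring
    refine key s0 hs0nonneg hs0t ?_ ?_
    · intro s hs
      constructor
      · have : α * s0 ≤ α * s := mul_le_mul_of_nonneg_left hs.1 hα.le
        have h2 : p ≤ x0 + α * s0 := le_of_eq hps0.symm
        linarith
      · have : α * s ≤ α * t := mul_le_mul_of_nonneg_left hs.2 hα.le
        rw [hx0]; nlinarith [hx.2]
    · rw [hps0]
      exact hbc s0 ⟨hs0nonneg, hs0t.trans ht.2⟩


theorem stmt3 (a b c d α T : ℝ) (hab : a < b) (hbc : b < c) (hcd : c < d)
    (hα : 0 < α) (hT : 0 ≤ T)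
    (ω₀ : ℝ → ℝ) (hω₀ : ContDiffOn ℝ 1 ω₀ (Set.Icc a d)) (hω₀a : ω₀ a = 0)
    (ω ωt ωx u ut ux v vt vx : ℝ → ℝ → ℝ)
    (hωt : ∀ x ∈ Set.Icc a d, ∀ t ∈ Set.Icc 0 T, HasDerivAt (fun τ => ω x τ) (ωt x t) t)
    (hωx : ∀ x ∈ Set.Icc a d, ∀ t ∈ Set.Icc 0 T, HasDerivAt (fun ξ => ω ξ t) (ωx x t) x)
    (hut : ∀ x ∈ Set.Icc a c, ∀ t ∈ Set.Icc 0 T, HasDerivAt (fun τ => u x τ) (ut x t) t)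
    (hux : ∀ x ∈ Set.Icc a c, ∀ t ∈ Set.Icc 0 T, HasDerivAt (fun ξ => u ξ t) (ux x t) x)
    (hvt : ∀ x ∈ Set.Icc b d, ∀ t ∈ Set.Icc 0 T, HasDerivAt (fun τ => v x τ) (vt x t) t)
    (hvx : ∀ x ∈ Set.Icc b d, ∀ t ∈ Set.Icc 0 T, HasDerivAt (fun ξ => v ξ t) (vx x t) x)
    (hcontω : ContinuousOn (fun p : ℝ × ℝ => ω p.1 p.2) (Set.Icc a d ×ˢ Set.Icc 0 T))
    (hcontωt : ContinuousOn (fun p : ℝ × ℝ => ωt p.1 p.2) (Set.Icc a d ×ˢ Set.Icc 0 T))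
    (hcontωx : ContinuousOn (fun p : ℝ × ℝ => ωx p.1 p.2) (Set.Icc a d ×ˢ Set.Icc 0 T))
    (hcontu : ContinuousOn (fun p : ℝ × ℝ => u p.1 p.2) (Set.Icc a c ×ˢ Set.Icc 0 T))
    (hcontut : ContinuousOn (fun p : ℝ × ℝ => ut p.1 p.2) (Set.Icc a c ×ˢ Set.Icc 0 T))
    (hcontux : ContinuousOn (fun p : ℝ × ℝ => ux p.1 p.2) (Set.Icc a c ×ˢ Set.Icc 0 T))
    (hcontv : ContinuousOn (fun p : ℝ × ℝ => v p.1 p.2) (Set.Icc b d ×ˢ Set.Icc 0 T))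
    (hcontvt : ContinuousOn (fun p : ℝ × ℝ => vt p.1 p.2) (Set.Icc b d ×ˢ Set.Icc 0 T))
    (hcontvx : ContinuousOn (fun p : ℝ × ℝ => vx p.1 p.2) (Set.Icc b d ×ˢ Set.Icc 0 T))
    (hpdeω : ∀ x ∈ Set.Icc a d, ∀ t ∈ Set.Icc 0 T, ωt x t + α * ωx x t = 0)
    (hpdeu : ∀ x ∈ Set.Icc a c, ∀ t ∈ Set.Icc 0 T, ut x t + α * ux x t = 0)
    (hpdev : ∀ x ∈ Set.Icc b d, ∀ t ∈ Set.Icc 0 T, vt x t + α * vx x t = 0)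
    (hbcω : ∀ t ∈ Set.Icc 0 T, ω a t = 0)
    (hbcu : ∀ t ∈ Set.Icc 0 T, u a t = 0)
    (hcouple : ∀ t ∈ Set.Icc 0 T, v b t = u b t)
    (hicω : ∀ x ∈ Set.Icc a d, ω x 0 = ω₀ x)
    (hicu : ∀ x ∈ Set.Icc a c, u x 0 = ω₀ x)
    (hicv : ∀ x ∈ Set.Icc b d, v x 0 = ω₀ x) :
    (∀ t ∈ Set.Icc 0 T, ∀ x ∈ Set.Icc a c, u x t = ω x t)
    ∧ (∀ t ∈ Set.Icc 0 T, ∀ x ∈ Set.Icc b d, v x t = ω x t) := by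
  have sub1 : Set.Icc a c ⊆ Set.Icc a d := Set.Icc_subset_Icc le_rfl hcd.le
  have sub2 : Set.Icc b d ⊆ Set.Icc a d := Set.Icc_subset_Icc hab.le le_rfl
  have h1 : ∀ t ∈ Set.Icc 0 T, ∀ x ∈ Set.Icc a c, u x t - ω x t = 0 := by
    apply transport_unique hα (fun x t => u x t - ω x t) (fun x t => ut x t - ωt x t)
      (fun x t => ux x t - ωx x t)
    · intro x hx t ht; exact (hut x hx t ht).sub (hωt x (sub1 hx) t ht)
    · intro x hx t ht; exact (hux x hx t ht).sub (hωx x (sub1 hx) t ht)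
    · exact hcontux.sub (hcontωx.mono (Set.prod_mono sub1 subset_rfl))
    · intro x hx t ht
      linear_combination hpdeu x hx t ht - hpdeω x (sub1 hx) t ht
    · intro t ht; rw [hbcu t ht, hbcω t ht]; ring
    · intro x hx; rw [hicu x hx, hicω x (sub1 hx)]; ring
  have h2 : ∀ t ∈ Set.Icc 0 T, ∀ x ∈ Set.Icc b d, v x t - ω x t = 0 := by
    apply transport_unique hα (fun x t => v x t - ω x t) (fun x t => vt x t - ωt x t)
      (fun x t => vx x t - ωx x t)
    · intro x hx t ht; exact (hvt x hx t ht).sub (hωt x (sub2 hx) t ht)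
    · intro x hx t ht; exact (hvx x hx t ht).sub (hωx x (sub2 hx) t ht)
    · exact hcontvx.sub (hcontωx.mono (Set.prod_mono sub2 subset_rfl))
    · intro x hx t ht
      linear_combination hpdev x hx t ht - hpdeω x (sub2 hx) t ht
    · intro t ht
      have hub := h1 t ht b ⟨hab.le, hbc.le⟩
      rw [hcouple t ht]
      linarith
    · intro x hx; rw [hicv x hx, hicω x (sub2 hx)]; ring
  exact ⟨fun t ht x hx => sub_eq_zero.1 (h1 t ht x hx),
    fun t ht x hx => sub_eq_zero.1 (h2 t ht x hx)⟩
end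

section
/- Let A, Σ_u, Σ_v, M be as above and R = ½[[I, I],[−I, I]]. Then RᵀMR = ¼[[4(Σ_u+Σ_v), 2βA + 2(Σ_u−Σ_v)], [2βA + 2(Σ_u−Σ_v), 0]]. Consequently, M ≥ 0 holds if and only if Σ_v − Σ_u = βA and Σ_u + Σ_v ≥ 0. -/
open Matrix

lemma eq_zero_of_mulVec (n : ℕ) (B : Matrix (Fin n) (Fin n) ℝ)
    (h : ∀ v, B *ᵥ v = 0) : B = 0 := by
  ext i j
  have := congrFun (h (Pi.single j 1)) i
  simpa [Matrix.mulVec_single] using this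

theorem stmt9 (n : ℕ) (β : ℝ) (A Su Sv : Matrix (Fin n) (Fin n) ℝ)
    (hA : A.IsSymm) (hSu : Su.IsSymm) (hSv : Sv.IsSymm) :
    let M := Matrix.fromBlocks (β • A + (2:ℝ) • Su) (-(Su + Sv)) (-(Su + Sv))
        (-(β • A) + (2:ℝ) • Sv)
    let R := (1/2 : ℝ) • Matrix.fromBlocks (1 : Matrix (Fin n) (Fin n) ℝ) 1 (-1) 1
    Rᵀ * M * R = (1/4 : ℝ) • Matrix.fromBlocks
        ((4:ℝ) • (Su + Sv)) ((2*β) • A + (2:ℝ) • (Su - Sv))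
        ((2*β) • A + (2:ℝ) • (Su - Sv)) 0
    ∧ (M.PosSemidef ↔ Sv - Su = β • A ∧ (Su + Sv).PosSemidef) := by
  intro M R
  constructor
  · have : Rᵀ * M * R = (1/4 : ℝ) •
        (Matrix.fromBlocks (1:Matrix (Fin n) (Fin n) ℝ) (-1) 1 1 * M *
          Matrix.fromBlocks (1:Matrix (Fin n) (Fin n) ℝ) 1 (-1) 1) := by
      show ((1/2 : ℝ) • Matrix.fromBlocks (1:Matrix (Fin n) (Fin n) ℝ) 1 (-1) 1)ᵀ * M *
        ((1/2 : ℝ) • Matrix.fromBlocks (1:Matrix (Fin n) (Fin n) ℝ) 1 (-1) 1) = _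
      rw [Matrix.transpose_smul, Matrix.fromBlocks_transpose]
      simp only [Matrix.transpose_one, Matrix.transpose_neg, Matrix.smul_mul,
        Matrix.mul_smul, smul_smul]
      norm_num
    rw [this]
    congr 1
    show Matrix.fromBlocks (1:Matrix (Fin n) (Fin n) ℝ) (-1) 1 1 *
        Matrix.fromBlocks (β • A + (2:ℝ) • Su) (-(Su + Sv)) (-(Su + Sv)) (-(β • A) + (2:ℝ) • Sv) *
        Matrix.fromBlocks (1:Matrix (Fin n) (Fin n) ℝ) 1 (-1) 1 = _
    rw [Matrix.fromBlocks_multiply, Matrix.fromBlocks_multiply]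
    simp only [Matrix.one_mul, Matrix.mul_one, Matrix.neg_mul, Matrix.mul_neg, neg_neg]
    rw [Matrix.fromBlocks_inj]
    refine ⟨by module, by module, by module, by module⟩
  · constructor
    · intro hM
      have key : ∀ v : Fin n → ℝ, M *ᵥ (Sum.elim v v) = 0 := by
        intro v
        apply (hM.dotProduct_mulVec_zero_iff _).mp
        show (star (Sum.elim v v)) ⬝ᵥ
          (Matrix.fromBlocks (β • A + (2:ℝ) • Su) (-(Su + Sv)) (-(Su + Sv))
            (-(β • A) + (2:ℝ) • Sv)) *ᵥ (Sum.elim v v) = 0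
        rw [Matrix.fromBlocks_mulVec]
        simp only [star_trivial, sumElim_dotProduct_sumElim, Sum.elim_comp_inl,
          Sum.elim_comp_inr, Matrix.add_mulVec, Matrix.neg_mulVec, Matrix.smul_mulVec,
          dotProduct_add, dotProduct_neg, dotProduct_smul, smul_eq_mul]
        ring
      have hB : β • A + Su - Sv = 0 := by
        apply eq_zero_of_mulVec
        intro v
        have h := key v
        rw [show M *ᵥ (Sum.elim v v) = Sum.elim
            ((β • A + (2:ℝ) • Su) *ᵥ v + (-(Su + Sv)) *ᵥ v)
            ((-(Su + Sv)) *ᵥ v + (-(β • A) + (2:ℝ) • Sv) *ᵥ v) from by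
          show (Matrix.fromBlocks (β • A + (2:ℝ) • Su) (-(Su + Sv)) (-(Su + Sv))
            (-(β • A) + (2:ℝ) • Sv)) *ᵥ (Sum.elim v v) = _
          rw [Matrix.fromBlocks_mulVec]
          simp only [Sum.elim_comp_inl, Sum.elim_comp_inr]] at h
        have h2 : (β • A + (2:ℝ) • Su) *ᵥ v + (-(Su + Sv)) *ᵥ v = 0 := by
          funext i
          exact congrFun h (Sum.inl i)
        have : ((β • A + (2:ℝ) • Su) + (-(Su + Sv))) *ᵥ v = 0 := by
          rw [Matrix.add_mulVec]; exact h2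
        rw [show (β • A + (2:ℝ) • Su) + (-(Su + Sv)) = β • A + Su - Sv by module] at this
        exact this
      have hBA : Sv - Su = β • A := by
        have h2 : β • A - (Sv - Su) = 0 := by
          rw [show β • A - (Sv - Su) = β • A + Su - Sv by module]; exact hB
        exact (sub_eq_zero.mp h2).symm
      refine ⟨hBA, Matrix.PosSemidef.of_dotProduct_mulVec_nonneg ?_ ?_⟩
      · show (Su + Sv)ᴴ = Su + Sv
        rw [Matrix.conjTranspose_eq_transpose_of_trivial, Matrix.transpose_add, hSu, hSv]
      · intro v
        have := hM.dotProduct_mulVec_nonneg (Sum.elim v (-v))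
        rw [show star (Sum.elim v (-v)) ⬝ᵥ M *ᵥ (Sum.elim v (-v)) =
            (4:ℝ) * (v ⬝ᵥ (Su + Sv) *ᵥ v) from ?_] at this
        · simp only [star_trivial]
          linarith
        · show star (Sum.elim v (-v)) ⬝ᵥ
            (Matrix.fromBlocks (β • A + (2:ℝ) • Su) (-(Su + Sv)) (-(Su + Sv))
              (-(β • A) + (2:ℝ) • Sv)) *ᵥ (Sum.elim v (-v)) = _
          rw [Matrix.fromBlocks_mulVec]
          simp only [star_trivial, sumElim_dotProduct_sumElim, Sum.elim_comp_inl,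
            Sum.elim_comp_inr, Matrix.add_mulVec, Matrix.neg_mulVec, Matrix.smul_mulVec,
            dotProduct_add, dotProduct_neg, dotProduct_smul, smul_eq_mul,
            Matrix.mulVec_neg, neg_dotProduct]
          ring
    · rintro ⟨h1, hP⟩
      have hC := hP.conjTranspose_mul_mul_same
        (Matrix.fromCols (1:Matrix (Fin n) (Fin n) ℝ) (-1:Matrix (Fin n) (Fin n) ℝ))
      have hMeq : M = (Matrix.fromCols (1:Matrix (Fin n) (Fin n) ℝ) (-1))ᴴ * (Su + Sv) *
          Matrix.fromCols (1:Matrix (Fin n) (Fin n) ℝ) (-1) := by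
        rw [Matrix.conjTranspose_eq_transpose_of_trivial, Matrix.transpose_fromCols,
          Matrix.fromRows_mul, Matrix.fromRows_mul_fromCols]
        simp only [Matrix.transpose_one, Matrix.transpose_neg, Matrix.one_mul,
          Matrix.mul_one, Matrix.neg_mul, Matrix.mul_neg, neg_neg]
        show Matrix.fromBlocks (β • A + (2:ℝ) • Su) (-(Su + Sv)) (-(Su + Sv))
            (-(β • A) + (2:ℝ) • Sv) = _
        rw [Matrix.fromBlocks_inj]
        rw [← h1]
        refine ⟨by module, rfl, rfl, by module⟩
      rw [hMeq]
      exact hC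
end

section
/- Let a < b < c < d, A real symmetric with nonzero eigenvalues, and suppose u on [a,c] and v on [b,d] are C¹ solutions of q_t + A q_x = 0 coupled by the characteristic conditions w_u⁻(c,t) = w_v⁻(c,t) and w_v⁺(b,t) = w_u⁺(b,t), with trivial incoming characteristic data w_u⁺(a,t)=0 and w_v⁻(d,t)=0 and common initial data ω₀. Then for every T, ∫_a^c |u(x,T)|² dx ≤ ∫_a^d |ω₀(x)|² dx and ∫_b^d |v(x,T)|² dx ≤ ∫_a^d |ω₀(x)|² dx. -/
open Set intervalIntegral Matrix MeasureTheory

private lemma interval_swap {p q T : ℝ} (hpq : p ≤ q) (hT : 0 ≤ T)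
    {g : ℝ → ℝ → ℝ} (hg : ContinuousOn (fun z : ℝ × ℝ => g z.1 z.2) (Icc p q ×ˢ Icc 0 T)) :
    ∫ x in p..q, ∫ t in (0:ℝ)..T, g x t = ∫ t in (0:ℝ)..T, ∫ x in p..q, g x t := by
  have hint : Integrable (Function.uncurry g)
      ((volume.restrict (Ioc p q)).prod (volume.restrict (Ioc 0 T))) := by
    rw [Measure.prod_restrict, ← Measure.volume_eq_prod ℝ ℝ]
    exact (hg.integrableOn_compact (isCompact_Icc.prod isCompact_Icc)).mono_set
      (Set.prod_mono Ioc_subset_Icc_self Ioc_subset_Icc_self)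
  simp_rw [intervalIntegral.integral_of_le hpq, intervalIntegral.integral_of_le hT]
  exact integral_integral_swap hint

private lemma energy_id {p q lam T : ℝ} (hpq : p ≤ q) (hT : 0 ≤ T)
    {f ft fx : ℝ → ℝ → ℝ}
    (hdt : ∀ x ∈ Icc p q, ∀ t ∈ Icc 0 T, HasDerivAt (fun τ => f x τ) (ft x t) t)
    (hdx : ∀ x ∈ Icc p q, ∀ t ∈ Icc 0 T, HasDerivAt (fun ξ => f ξ t) (fx x t) x)
    (hcf : ContinuousOn (fun z : ℝ × ℝ => f z.1 z.2) (Icc p q ×ˢ Icc 0 T))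
    (hcft : ContinuousOn (fun z : ℝ × ℝ => ft z.1 z.2) (Icc p q ×ˢ Icc 0 T))
    (hcfx : ContinuousOn (fun z : ℝ × ℝ => fx z.1 z.2) (Icc p q ×ˢ Icc 0 T))
    (hpde : ∀ x ∈ Icc p q, ∀ t ∈ Icc 0 T, ft x t + lam * fx x t = 0) :
    (∫ x in p..q, f x T ^ 2)
      = (∫ x in p..q, f x 0 ^ 2)
        + lam * (∫ t in (0:ℝ)..T, f p t ^ 2) - lam * (∫ t in (0:ℝ)..T, f q t ^ 2) := by
  have hT' : uIcc (0:ℝ) T = Icc 0 T := uIcc_of_le hT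
  have hpq' : uIcc p q = Icc p q := uIcc_of_le hpq
  have sect_t : ∀ (g : ℝ → ℝ → ℝ), ContinuousOn (fun z : ℝ × ℝ => g z.1 z.2) (Icc p q ×ˢ Icc 0 T) →
      ∀ x ∈ Icc p q, ContinuousOn (fun t => g x t) (Icc 0 T) := by
    intro g hg x hx
    exact hg.comp ((continuous_const.prodMk continuous_id).continuousOn)
      (fun t ht => Set.mk_mem_prod hx ht)
  have sect_x : ∀ (g : ℝ → ℝ → ℝ), ContinuousOn (fun z : ℝ × ℝ => g z.1 z.2) (Icc p q ×ˢ Icc 0 T) →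
      ∀ t ∈ Icc 0 T, ContinuousOn (fun x => g x t) (Icc p q) := by
    intro g hg t ht
    exact hg.comp ((continuous_id.prodMk continuous_const).continuousOn)
      (fun x hx => Set.mk_mem_prod hx ht)
  have key1 : ∀ x ∈ Icc p q, (∫ t in (0:ℝ)..T, 2 * f x t * ft x t) = f x T ^ 2 - f x 0 ^ 2 := by
    intro x hx
    apply intervalIntegral.integral_eq_sub_of_hasDerivAt
    · intro t ht
      rw [hT'] at ht
      have h2 : HasDerivAt (fun τ => f x τ ^ 2) _ t := (hdt x hx t ht).pow 2
      simpa [pow_one] using h2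
    · apply ContinuousOn.intervalIntegrable
      rw [hT']
      exact (continuousOn_const.mul (sect_t f hcf x hx)).mul (sect_t ft hcft x hx)
  have key2 : ∀ t ∈ Icc 0 T, (∫ x in p..q, 2 * f x t * fx x t) = f q t ^ 2 - f p t ^ 2 := by
    intro t ht
    apply intervalIntegral.integral_eq_sub_of_hasDerivAt
    · intro x hx
      rw [hpq'] at hx
      have h2 : HasDerivAt (fun ξ => f ξ t ^ 2) _ x := (hdx x hx t ht).pow 2
      simpa [pow_one] using h2
    · apply ContinuousOn.intervalIntegrable
      rw [hpq']
      exact (continuousOn_const.mul (sect_x f hcf t ht)).mul (sect_x fx hcfx t ht)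
  have hIfT : IntervalIntegrable (fun x => f x T ^ 2) volume p q := by
    apply ContinuousOn.intervalIntegrable; rw [hpq']
    exact (sect_x f hcf T (right_mem_Icc.mpr hT)).pow 2
  have hIf0 : IntervalIntegrable (fun x => f x 0 ^ 2) volume p q := by
    apply ContinuousOn.intervalIntegrable; rw [hpq']
    exact (sect_x f hcf 0 (left_mem_Icc.mpr hT)).pow 2
  have hIp : IntervalIntegrable (fun t => f p t ^ 2) volume 0 T := by
    apply ContinuousOn.intervalIntegrable; rw [hT']
    exact (sect_t f hcf p (left_mem_Icc.mpr hpq)).pow 2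
  have hIq : IntervalIntegrable (fun t => f q t ^ 2) volume 0 T := by
    apply ContinuousOn.intervalIntegrable; rw [hT']
    exact (sect_t f hcf q (right_mem_Icc.mpr hpq)).pow 2
  have step1 : (∫ x in p..q, f x T ^ 2) - (∫ x in p..q, f x 0 ^ 2)
      = ∫ x in p..q, (f x T ^ 2 - f x 0 ^ 2) := (intervalIntegral.integral_sub hIfT hIf0).symm
  have step2 : (∫ x in p..q, (f x T ^ 2 - f x 0 ^ 2))
      = ∫ x in p..q, ∫ t in (0:ℝ)..T, (-lam) * (2 * f x t * fx x t) := by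
    apply intervalIntegral.integral_congr
    intro x hx
    rw [hpq'] at hx
    dsimp only
    rw [← key1 x hx]
    apply intervalIntegral.integral_congr
    intro t ht
    rw [hT'] at ht
    have h := hpde x hx t ht
    have hft : ft x t = -(lam * fx x t) := by linarith
    simp only [hft]; ring
  have step3 : (∫ x in p..q, ∫ t in (0:ℝ)..T, (-lam) * (2 * f x t * fx x t))
      = ∫ t in (0:ℝ)..T, ∫ x in p..q, (-lam) * (2 * f x t * fx x t) := by
    apply interval_swap hpq hT
    exact continuousOn_const.mul ((continuousOn_const.mul hcf).mul hcfx)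
  have step4 : (∫ t in (0:ℝ)..T, ∫ x in p..q, (-lam) * (2 * f x t * fx x t))
      = ∫ t in (0:ℝ)..T, (-lam) * (f q t ^ 2 - f p t ^ 2) := by
    apply intervalIntegral.integral_congr
    intro t ht
    rw [hT'] at ht
    dsimp only
    rw [intervalIntegral.integral_const_mul, key2 t ht]
  have step5 : (∫ t in (0:ℝ)..T, (-lam) * (f q t ^ 2 - f p t ^ 2))
      = lam * (∫ t in (0:ℝ)..T, f p t ^ 2) - lam * (∫ t in (0:ℝ)..T, f q t ^ 2) := by
    rw [intervalIntegral.integral_const_mul, intervalIntegral.integral_sub hIq hIp]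
    ring
  linarith [step1, step2, step3, step4, step5]
private lemma vec_energy {n : ℕ} (P : Matrix (Fin n) (Fin n) ℝ) (Λ : Fin n → ℝ)
    (hP : Pᵀ * P = 1)
    {A : Matrix (Fin n) (Fin n) ℝ} (hA : A = P * Matrix.diagonal Λ * Pᵀ)
    {lo hi : ℝ} {u ut ux : ℝ → ℝ → Fin n → ℝ}
    (hut : ∀ x ∈ Set.Icc lo hi, ∀ t ∈ Set.Ici (0:ℝ), HasDerivAt (fun τ => u x τ) (ut x t) t)
    (hux : ∀ x ∈ Set.Icc lo hi, ∀ t ∈ Set.Ici (0:ℝ), HasDerivAt (fun ξ => u ξ t) (ux x t) x)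
    (hcontu : ContinuousOn (fun z : ℝ × ℝ => u z.1 z.2) (Set.Icc lo hi ×ˢ Set.Ici 0))
    (hcontut : ContinuousOn (fun z : ℝ × ℝ => ut z.1 z.2) (Set.Icc lo hi ×ˢ Set.Ici 0))
    (hcontux : ContinuousOn (fun z : ℝ × ℝ => ux z.1 z.2) (Set.Icc lo hi ×ˢ Set.Ici 0))
    (hpdeu : ∀ x ∈ Set.Icc lo hi, ∀ t ∈ Set.Ici (0:ℝ), ut x t + A *ᵥ ux x t = 0)
    {p q T : ℝ} (hpq : p ≤ q) (hT : 0 ≤ T) (hsub : Set.Icc p q ⊆ Set.Icc lo hi) (i : Fin n) :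
    (∫ x in p..q, (Pᵀ *ᵥ u x T) i ^ 2)
      = (∫ x in p..q, (Pᵀ *ᵥ u x 0) i ^ 2)
        + Λ i * (∫ t in (0:ℝ)..T, (Pᵀ *ᵥ u p t) i ^ 2)
        - Λ i * (∫ t in (0:ℝ)..T, (Pᵀ *ᵥ u q t) i ^ 2) := by
  have hmono : (Icc p q ×ˢ Icc (0:ℝ) T : Set (ℝ × ℝ)) ⊆ Icc lo hi ×ˢ Ici 0 :=
    Set.prod_mono hsub Icc_subset_Ici_self
  have hcw : ∀ (g : ℝ → ℝ → Fin n → ℝ),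
      ContinuousOn (fun z : ℝ × ℝ => g z.1 z.2) (Icc lo hi ×ˢ Ici 0) →
      ContinuousOn (fun z : ℝ × ℝ => (Pᵀ *ᵥ g z.1 z.2) i) (Icc p q ×ˢ Icc 0 T) := by
    intro g hg
    have hg' := hg.mono hmono
    simp only [Matrix.mulVec, dotProduct]
    exact continuousOn_finset_sum _ fun j _ =>
      continuousOn_const.mul ((continuous_apply j).comp_continuousOn hg')
  have hwdt : ∀ x ∈ Icc p q, ∀ t ∈ Icc (0:ℝ) T,
      HasDerivAt (fun τ => (Pᵀ *ᵥ u x τ) i) ((Pᵀ *ᵥ ut x t) i) t := by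
    intro x hx t ht
    have h := hasDerivAt_pi.1 (hut x (hsub hx) t (Set.mem_Ici.mpr ht.1))
    simp only [Matrix.mulVec, dotProduct]
    exact HasDerivAt.fun_sum fun j _ => (h j).const_mul _
  have hwdx : ∀ x ∈ Icc p q, ∀ t ∈ Icc (0:ℝ) T,
      HasDerivAt (fun ξ => (Pᵀ *ᵥ u ξ t) i) ((Pᵀ *ᵥ ux x t) i) x := by
    intro x hx t ht
    have h := hasDerivAt_pi.1 (hux x (hsub hx) t (Set.mem_Ici.mpr ht.1))
    simp only [Matrix.mulVec, dotProduct]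
    exact HasDerivAt.fun_sum fun j _ => (h j).const_mul _
  have hPA : Pᵀ * A = Matrix.diagonal Λ * Pᵀ := by
    rw [hA, ← Matrix.mul_assoc, ← Matrix.mul_assoc, hP, Matrix.one_mul]
  have hwpde : ∀ x ∈ Icc p q, ∀ t ∈ Icc (0:ℝ) T,
      (Pᵀ *ᵥ ut x t) i + Λ i * (Pᵀ *ᵥ ux x t) i = 0 := by
    intro x hx t ht
    have h := hpdeu x (hsub hx) t (Set.mem_Ici.mpr ht.1)
    have h2 : Pᵀ *ᵥ (ut x t + A *ᵥ ux x t) = Pᵀ *ᵥ (0 : Fin n → ℝ) := congrArg _ h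
    rw [Matrix.mulVec_add, Matrix.mulVec_mulVec, hPA, Matrix.mulVec_zero] at h2
    have h3 := congrFun h2 i
    simpa [← Matrix.mulVec_mulVec, Matrix.mulVec_diagonal] using h3
  exact energy_id (f := fun x t => (Pᵀ *ᵥ u x t) i) (ft := fun x t => (Pᵀ *ᵥ ut x t) i)
    (fx := fun x t => (Pᵀ *ᵥ ux x t) i) hpq hT hwdt hwdx
    (hcw u hcontu) (hcw ut hcontut) (hcw ux hcontux) hwpde
theorem stmt15 (n : ℕ) (a b c d : ℝ) (hab : a < b) (hbc : b < c) (hcd : c < d)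
    (P : Matrix (Fin n) (Fin n) ℝ) (Λ : Fin n → ℝ)
    (hP : Pᵀ * P = 1) (hΛ : ∀ i, Λ i ≠ 0)
    (A : Matrix (Fin n) (Fin n) ℝ) (hA : A = P * Matrix.diagonal Λ * Pᵀ)
    (ω₀ : ℝ → Fin n → ℝ)
    (u ut ux v vt vx : ℝ → ℝ → Fin n → ℝ)
    (hut : ∀ x ∈ Set.Icc a c, ∀ t ∈ Set.Ici (0:ℝ), HasDerivAt (fun τ => u x τ) (ut x t) t)
    (hux : ∀ x ∈ Set.Icc a c, ∀ t ∈ Set.Ici (0:ℝ), HasDerivAt (fun ξ => u ξ t) (ux x t) x)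
    (hvt : ∀ x ∈ Set.Icc b d, ∀ t ∈ Set.Ici (0:ℝ), HasDerivAt (fun τ => v x τ) (vt x t) t)
    (hvx : ∀ x ∈ Set.Icc b d, ∀ t ∈ Set.Ici (0:ℝ), HasDerivAt (fun ξ => v ξ t) (vx x t) x)
    (hcontu : ContinuousOn (fun p : ℝ × ℝ => u p.1 p.2) (Set.Icc a c ×ˢ Set.Ici 0))
    (hcontut : ContinuousOn (fun p : ℝ × ℝ => ut p.1 p.2) (Set.Icc a c ×ˢ Set.Ici 0))
    (hcontux : ContinuousOn (fun p : ℝ × ℝ => ux p.1 p.2) (Set.Icc a c ×ˢ Set.Ici 0))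
    (hcontv : ContinuousOn (fun p : ℝ × ℝ => v p.1 p.2) (Set.Icc b d ×ˢ Set.Ici 0))
    (hcontvt : ContinuousOn (fun p : ℝ × ℝ => vt p.1 p.2) (Set.Icc b d ×ˢ Set.Ici 0))
    (hcontvx : ContinuousOn (fun p : ℝ × ℝ => vx p.1 p.2) (Set.Icc b d ×ˢ Set.Ici 0))
    (hpdeu : ∀ x ∈ Set.Icc a c, ∀ t ∈ Set.Ici (0:ℝ), ut x t + A *ᵥ ux x t = 0)
    (hpdev : ∀ x ∈ Set.Icc b d, ∀ t ∈ Set.Ici (0:ℝ), vt x t + A *ᵥ vx x t = 0)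
    (hcouple_c : ∀ t ∈ Set.Ici (0:ℝ), ∀ i, Λ i < 0 → (Pᵀ *ᵥ u c t) i = (Pᵀ *ᵥ v c t) i)
    (hcouple_b : ∀ t ∈ Set.Ici (0:ℝ), ∀ i, 0 < Λ i → (Pᵀ *ᵥ v b t) i = (Pᵀ *ᵥ u b t) i)
    (hbcu : ∀ t ∈ Set.Ici (0:ℝ), ∀ i, 0 < Λ i → (Pᵀ *ᵥ u a t) i = 0)
    (hbcv : ∀ t ∈ Set.Ici (0:ℝ), ∀ i, Λ i < 0 → (Pᵀ *ᵥ v d t) i = 0)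
    (hicu : ∀ x ∈ Set.Icc a c, u x 0 = ω₀ x)
    (hicv : ∀ x ∈ Set.Icc b d, v x 0 = ω₀ x)
    (T : ℝ) (hT : 0 ≤ T) :
    (∫ x in a..c, u x T ⬝ᵥ u x T) ≤ (∫ x in a..d, ω₀ x ⬝ᵥ ω₀ x)
    ∧ (∫ x in b..d, v x T ⬝ᵥ v x T) ≤ (∫ x in a..d, ω₀ x ⬝ᵥ ω₀ x) := by
  have hac : a ≤ c := (hab.trans hbc).le
  have hbd : b ≤ d := (hbc.trans hcd).le
  have had : a ≤ d := hac.trans hcd.le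
  have hT' : uIcc (0:ℝ) T = Icc 0 T := uIcc_of_le hT
  -- energy identities
  have EU : ∀ (p q : ℝ), p ≤ q → Set.Icc p q ⊆ Set.Icc a c → ∀ i,
      (∫ x in p..q, (Pᵀ *ᵥ u x T) i ^ 2)
        = (∫ x in p..q, (Pᵀ *ᵥ u x 0) i ^ 2)
          + Λ i * (∫ t in (0:ℝ)..T, (Pᵀ *ᵥ u p t) i ^ 2)
          - Λ i * (∫ t in (0:ℝ)..T, (Pᵀ *ᵥ u q t) i ^ 2) :=
    fun p q hpq hsub i =>
      vec_energy P Λ hP hA hut hux hcontu hcontut hcontux hpdeu hpq hT hsub i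
  have EV : ∀ (p q : ℝ), p ≤ q → Set.Icc p q ⊆ Set.Icc b d → ∀ i,
      (∫ x in p..q, (Pᵀ *ᵥ v x T) i ^ 2)
        = (∫ x in p..q, (Pᵀ *ᵥ v x 0) i ^ 2)
          + Λ i * (∫ t in (0:ℝ)..T, (Pᵀ *ᵥ v p t) i ^ 2)
          - Λ i * (∫ t in (0:ℝ)..T, (Pᵀ *ᵥ v q t) i ^ 2) :=
    fun p q hpq hsub i =>
      vec_energy P Λ hP hA hvt hvx hcontv hcontvt hcontvx hpdev hpq hT hsub i
  -- continuity of sections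
  have hu0 : ContinuousOn (fun x => u x 0) (Icc a c) :=
    hcontu.comp ((continuous_id.prodMk continuous_const).continuousOn)
      (fun x hx => Set.mk_mem_prod hx (Set.mem_Ici.mpr le_rfl))
  have huT : ContinuousOn (fun x => u x T) (Icc a c) :=
    hcontu.comp ((continuous_id.prodMk continuous_const).continuousOn)
      (fun x hx => Set.mk_mem_prod hx (Set.mem_Ici.mpr hT))
  have hv0 : ContinuousOn (fun x => v x 0) (Icc b d) :=
    hcontv.comp ((continuous_id.prodMk continuous_const).continuousOn)
      (fun x hx => Set.mk_mem_prod hx (Set.mem_Ici.mpr le_rfl))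
  have hvT : ContinuousOn (fun x => v x T) (Icc b d) :=
    hcontv.comp ((continuous_id.prodMk continuous_const).continuousOn)
      (fun x hx => Set.mk_mem_prod hx (Set.mem_Ici.mpr hT))
  have hω1 : ContinuousOn ω₀ (Icc a c) := hu0.congr (fun x hx => (hicu x hx).symm)
  have hω4 : ContinuousOn ω₀ (Icc b d) := hv0.congr (fun x hx => (hicv x hx).symm)
  have hω2 : ContinuousOn ω₀ (Icc c d) := hω4.mono (Icc_subset_Icc hbc.le le_rfl)
  have hω3 : ContinuousOn ω₀ (Icc a b) := hω1.mono (Icc_subset_Icc le_rfl hbc.le)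
  have csq : ∀ (g : ℝ → Fin n → ℝ) (s : Set ℝ), ContinuousOn g s → ∀ i : Fin n,
      ContinuousOn (fun x => (Pᵀ *ᵥ g x) i ^ 2) s := by
    intro g s hg i
    have h : ContinuousOn (fun x => (Pᵀ *ᵥ g x) i) s := by
      simp only [Matrix.mulVec, dotProduct]
      exact continuousOn_finset_sum _ fun j _ =>
        continuousOn_const.mul ((continuous_apply j).comp_continuousOn hg)
    exact h.pow 2
  -- integrability of ω₀ component squares on pieces
  have Iac : ∀ i : Fin n, IntervalIntegrable (fun x => (Pᵀ *ᵥ ω₀ x) i ^ 2) volume a c :=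
    fun i => by
      apply ContinuousOn.intervalIntegrable; rw [uIcc_of_le hac]; exact csq ω₀ _ hω1 i
  have Icd : ∀ i : Fin n, IntervalIntegrable (fun x => (Pᵀ *ᵥ ω₀ x) i ^ 2) volume c d :=
    fun i => by
      apply ContinuousOn.intervalIntegrable; rw [uIcc_of_le hcd.le]; exact csq ω₀ _ hω2 i
  have Iab : ∀ i : Fin n, IntervalIntegrable (fun x => (Pᵀ *ᵥ ω₀ x) i ^ 2) volume a b :=
    fun i => by
      apply ContinuousOn.intervalIntegrable; rw [uIcc_of_le hab.le]; exact csq ω₀ _ hω3 i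
  have Ibd : ∀ i : Fin n, IntervalIntegrable (fun x => (Pᵀ *ᵥ ω₀ x) i ^ 2) volume b d :=
    fun i => by
      apply ContinuousOn.intervalIntegrable; rw [uIcc_of_le hbd]; exact csq ω₀ _ hω4 i
  have split_c : ∀ i : Fin n,
      (∫ x in a..c, (Pᵀ *ᵥ ω₀ x) i ^ 2) + (∫ x in c..d, (Pᵀ *ᵥ ω₀ x) i ^ 2)
        = ∫ x in a..d, (Pᵀ *ᵥ ω₀ x) i ^ 2 :=
    fun i => intervalIntegral.integral_add_adjacent_intervals (Iac i) (Icd i)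
  have split_b : ∀ i : Fin n,
      (∫ x in a..b, (Pᵀ *ᵥ ω₀ x) i ^ 2) + (∫ x in b..d, (Pᵀ *ᵥ ω₀ x) i ^ 2)
        = ∫ x in a..d, (Pᵀ *ᵥ ω₀ x) i ^ 2 :=
    fun i => intervalIntegral.integral_add_adjacent_intervals (Iab i) (Ibd i)
  have nn : ∀ (g : ℝ → ℝ) (p q : ℝ), p ≤ q → 0 ≤ ∫ x in p..q, g x ^ 2 :=
    fun g p q h => intervalIntegral.integral_nonneg h (fun x _ => sq_nonneg _)
  -- main per-component estimates
  have key : ∀ i : Fin n,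
      (∫ x in a..c, (Pᵀ *ᵥ u x T) i ^ 2) ≤ (∫ x in a..d, (Pᵀ *ᵥ ω₀ x) i ^ 2)
      ∧ (∫ x in b..d, (Pᵀ *ᵥ v x T) i ^ 2) ≤ (∫ x in a..d, (Pᵀ *ᵥ ω₀ x) i ^ 2) := by
    intro i
    have Eac := EU a c hac Set.Subset.rfl i
    have Eab := EU a b hab.le (Icc_subset_Icc le_rfl hbc.le) i
    have Ebd := EV b d hbd Set.Subset.rfl i
    have Ecd := EV c d hcd.le (Icc_subset_Icc hbc.le le_rfl) i
    have ic_ac : (∫ x in a..c, (Pᵀ *ᵥ u x 0) i ^ 2) = ∫ x in a..c, (Pᵀ *ᵥ ω₀ x) i ^ 2 := by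
      apply intervalIntegral.integral_congr
      intro x hx; rw [uIcc_of_le hac] at hx; dsimp only; rw [hicu x hx]
    have ic_ab : (∫ x in a..b, (Pᵀ *ᵥ u x 0) i ^ 2) = ∫ x in a..b, (Pᵀ *ᵥ ω₀ x) i ^ 2 := by
      apply intervalIntegral.integral_congr
      intro x hx; rw [uIcc_of_le hab.le] at hx; dsimp only
      rw [hicu x (Icc_subset_Icc le_rfl hbc.le hx)]
    have ic_bd : (∫ x in b..d, (Pᵀ *ᵥ v x 0) i ^ 2) = ∫ x in b..d, (Pᵀ *ᵥ ω₀ x) i ^ 2 := by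
      apply intervalIntegral.integral_congr
      intro x hx; rw [uIcc_of_le hbd] at hx; dsimp only; rw [hicv x hx]
    have ic_cd : (∫ x in c..d, (Pᵀ *ᵥ v x 0) i ^ 2) = ∫ x in c..d, (Pᵀ *ᵥ ω₀ x) i ^ 2 := by
      apply intervalIntegral.integral_congr
      intro x hx; rw [uIcc_of_le hcd.le] at hx; dsimp only
      rw [hicv x (Icc_subset_Icc hbc.le le_rfl hx)]
    rcases (hΛ i).lt_or_gt with hneg | hpos
    · -- Λ i < 0
      have bd0 : (∫ t in (0:ℝ)..T, (Pᵀ *ᵥ v d t) i ^ 2) = 0 := by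
        rw [show (∫ t in (0:ℝ)..T, (Pᵀ *ᵥ v d t) i ^ 2) = ∫ t in (0:ℝ)..T, (0:ℝ) from
          intervalIntegral.integral_congr (fun t ht => by
            rw [hT'] at ht
            rw [hbcv t (Set.mem_Ici.mpr ht.1) i hneg]; ring)]
        simp
      have hvb_nn := nn (fun t => (Pᵀ *ᵥ v b t) i) 0 T hT
      have h1 : (∫ x in b..d, (Pᵀ *ᵥ v x T) i ^ 2) ≤ ∫ x in b..d, (Pᵀ *ᵥ ω₀ x) i ^ 2 := by
        rw [Ebd, ic_bd, bd0, mul_zero]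
        have : Λ i * (∫ t in (0:ℝ)..T, (Pᵀ *ᵥ v b t) i ^ 2) ≤ 0 :=
          mul_nonpos_iff.mpr (Or.inr ⟨hneg.le, hvb_nn⟩)
        linarith
      have hcdT_nn := nn (fun x => (Pᵀ *ᵥ v x T) i) c d hcd.le
      have h2 : -(Λ i * (∫ t in (0:ℝ)..T, (Pᵀ *ᵥ v c t) i ^ 2))
          ≤ ∫ x in c..d, (Pᵀ *ᵥ ω₀ x) i ^ 2 := by
        rw [Ecd, ic_cd, bd0, mul_zero] at hcdT_nn
        linarith
      have hc_eq : (∫ t in (0:ℝ)..T, (Pᵀ *ᵥ u c t) i ^ 2)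
          = ∫ t in (0:ℝ)..T, (Pᵀ *ᵥ v c t) i ^ 2 := by
        apply intervalIntegral.integral_congr
        intro t ht; rw [hT'] at ht; dsimp only
        rw [hcouple_c t (Set.mem_Ici.mpr ht.1) i hneg]
      have hua_nn := nn (fun t => (Pᵀ *ᵥ u a t) i) 0 T hT
      have h3 : (∫ x in a..c, (Pᵀ *ᵥ u x T) i ^ 2)
          ≤ (∫ x in a..c, (Pᵀ *ᵥ ω₀ x) i ^ 2) + (∫ x in c..d, (Pᵀ *ᵥ ω₀ x) i ^ 2) := by
        rw [Eac, ic_ac, hc_eq]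
        have : Λ i * (∫ t in (0:ℝ)..T, (Pᵀ *ᵥ u a t) i ^ 2) ≤ 0 :=
          mul_nonpos_iff.mpr (Or.inr ⟨hneg.le, hua_nn⟩)
        linarith
      refine ⟨by rw [← split_c i]; exact h3, ?_⟩
      have hab_nn := nn (fun x => (Pᵀ *ᵥ ω₀ x) i) a b hab.le
      rw [← split_b i]; linarith
    · -- 0 < Λ i
      have a0 : (∫ t in (0:ℝ)..T, (Pᵀ *ᵥ u a t) i ^ 2) = 0 := by
        rw [show (∫ t in (0:ℝ)..T, (Pᵀ *ᵥ u a t) i ^ 2) = ∫ t in (0:ℝ)..T, (0:ℝ) from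
          intervalIntegral.integral_congr (fun t ht => by
            rw [hT'] at ht
            rw [hbcu t (Set.mem_Ici.mpr ht.1) i hpos]; ring)]
        simp
      have huc_nn := nn (fun t => (Pᵀ *ᵥ u c t) i) 0 T hT
      have h1 : (∫ x in a..c, (Pᵀ *ᵥ u x T) i ^ 2) ≤ ∫ x in a..c, (Pᵀ *ᵥ ω₀ x) i ^ 2 := by
        rw [Eac, ic_ac, a0, mul_zero]
        have : 0 ≤ Λ i * (∫ t in (0:ℝ)..T, (Pᵀ *ᵥ u c t) i ^ 2) :=
          mul_nonneg hpos.le huc_nn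
        linarith
      have habT_nn := nn (fun x => (Pᵀ *ᵥ u x T) i) a b hab.le
      have h2 : Λ i * (∫ t in (0:ℝ)..T, (Pᵀ *ᵥ u b t) i ^ 2)
          ≤ ∫ x in a..b, (Pᵀ *ᵥ ω₀ x) i ^ 2 := by
        rw [Eab, ic_ab, a0, mul_zero] at habT_nn
        linarith
      have cb_eq : (∫ t in (0:ℝ)..T, (Pᵀ *ᵥ v b t) i ^ 2)
          = ∫ t in (0:ℝ)..T, (Pᵀ *ᵥ u b t) i ^ 2 := by
        apply intervalIntegral.integral_congr
        intro t ht; rw [hT'] at ht; dsimp only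
        rw [hcouple_b t (Set.mem_Ici.mpr ht.1) i hpos]
      have hvd_nn := nn (fun t => (Pᵀ *ᵥ v d t) i) 0 T hT
      have h3 : (∫ x in b..d, (Pᵀ *ᵥ v x T) i ^ 2)
          ≤ (∫ x in a..b, (Pᵀ *ᵥ ω₀ x) i ^ 2) + (∫ x in b..d, (Pᵀ *ᵥ ω₀ x) i ^ 2) := by
        rw [Ebd, ic_bd, cb_eq]
        have : 0 ≤ Λ i * (∫ t in (0:ℝ)..T, (Pᵀ *ᵥ v d t) i ^ 2) :=
          mul_nonneg hpos.le hvd_nn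
        linarith
      have hcd_nn := nn (fun x => (Pᵀ *ᵥ ω₀ x) i) c d hcd.le
      exact ⟨by rw [← split_c i]; linarith, by rw [← split_b i]; exact h3⟩
  -- rewrite dot products as sums of characteristic components
  have hPP : P * Pᵀ = 1 := mul_eq_one_comm.mp hP
  have dot_eq : ∀ w : Fin n → ℝ, w ⬝ᵥ w = ∑ i, (Pᵀ *ᵥ w) i ^ 2 := by
    intro w
    have h1 : (Pᵀ *ᵥ w) ⬝ᵥ (Pᵀ *ᵥ w) = w ⬝ᵥ w := by
      nth_rewrite 1 [Matrix.dotProduct_mulVec]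
      rw [Matrix.mulVec_transpose, Matrix.vecMul_vecMul, hPP, Matrix.vecMul_one]
    rw [← h1]
    simp [dotProduct, pow_two]
  have sumU : (∫ x in a..c, u x T ⬝ᵥ u x T) = ∑ i, ∫ x in a..c, (Pᵀ *ᵥ u x T) i ^ 2 := by
    simp_rw [dot_eq]
    apply intervalIntegral.integral_finset_sum
    intro i _
    apply ContinuousOn.intervalIntegrable; rw [uIcc_of_le hac]
    exact csq (fun x => u x T) _ huT i
  have sumV : (∫ x in b..d, v x T ⬝ᵥ v x T) = ∑ i, ∫ x in b..d, (Pᵀ *ᵥ v x T) i ^ 2 := by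
    simp_rw [dot_eq]
    apply intervalIntegral.integral_finset_sum
    intro i _
    apply ContinuousOn.intervalIntegrable; rw [uIcc_of_le hbd]
    exact csq (fun x => v x T) _ hvT i
  have sumΩ : (∫ x in a..d, ω₀ x ⬝ᵥ ω₀ x) = ∑ i, ∫ x in a..d, (Pᵀ *ᵥ ω₀ x) i ^ 2 := by
    simp_rw [dot_eq]
    apply intervalIntegral.integral_finset_sum
    intro i _
    exact (Iac i).trans (Icd i)
  constructor
  · rw [sumU, sumΩ]
    exact Finset.sum_le_sum (fun i _ => (key i).1)
  · rw [sumV, sumΩ]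
    exact Finset.sum_le_sum (fun i _ => (key i).2)
end
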